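/- For every n ∈ ℕ, the convolution identity Σ_{m=0}^{n} α_{n−m} · β_m = δ_{n,0} holds in ℚ, i.e. the sum equals 1 if n = 0 and equals 0 if n ≥ 1. (Equivalently, the formal power series Σ α_i s^i and Σ β_i s^i in ℚ⟦s⟧ are multiplicative inverses of each other.) -/

import Mathlib

/-!
Statement 6: the convolution identity `Σ_{m=0}^{n} α_{n−m} β_m = δ_{n,0}` in `ℚ`,
i.e. the power series `Σ α_i s^i` and `Σ β_i s^i` are multiplicative inverses.
-/

/-- `α_i = (−2)^i/(2i+1)!` as a rational number. -/
def alphaQ (i : ℕ) : ℚ := (-2 : ℚ) ^ i / Nat.factorial (2 * i + 1)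

/-- `β_i = (−1)^{i−1} · 2^i · (2^{2i} − 2) · B_{2i}/(2i)!` as a rational number.
(We write `(−1)^{i+1} = (−1)^{i−1}`, which is also correct for `i = 0`;
in particular `β_0 = 1` and `β_1 = 1/3`.) -/
def betaQ (i : ℕ) : ℚ :=
  (-1 : ℚ) ^ (i + 1) * 2 ^ i * (2 ^ (2 * i) - 2) *
    bernoulli (2 * i) / Nat.factorial (2 * i)

open PowerSeries

/-- `F = Σ (2^k − 2) B_k X^k / k!`, i.e. `−x/sinh x`. -/
noncomputable def Fser : ℚ⟦X⟧ := rescale 2 (bernoulliPowerSeries ℚ) - 2 * bernoulliPowerSeries ℚ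

/-- `H = e^x − e^{−x} = 2 sinh x`. -/
noncomputable def Hser : ℚ⟦X⟧ := exp ℚ - evalNegHom (exp ℚ)

lemma two_eq_C : (2 : ℚ⟦X⟧) = PowerSeries.C (R := ℚ) 2 := (map_ofNat (PowerSeries.C (R := ℚ)) 2).symm

lemma coeff_Fser (k : ℕ) :
    coeff (R := ℚ) k Fser = (2 ^ k - 2) * bernoulli k / Nat.factorial k := by
  rw [Fser, two_eq_C, map_sub, coeff_C_mul, coeff_rescale]
  simp only [bernoulliPowerSeries, coeff_mk, Algebra.algebraMap_self, RingHom.id_apply]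
  ring

lemma coeff_Hser (k : ℕ) :
    coeff (R := ℚ) k Hser = (1 - (-1 : ℚ) ^ k) / Nat.factorial k := by
  simp only [Hser, evalNegHom, map_sub, PowerSeries.exp, coeff_rescale, coeff_mk,
    Algebra.algebraMap_self, RingHom.id_apply]
  ring

lemma key_identity : Fser * Hser = -(2 * X) := by
  have hbps := bernoulliPowerSeries_mul_exp_sub_one ℚ
  have hE : exp ℚ * evalNegHom (exp ℚ) = 1 := exp_mul_exp_neg_eq_one
  have hEE : exp ℚ * exp ℚ = rescale (2 : ℚ) (exp ℚ) := by
    have h := exp_mul_exp_eq_exp_add (1 : ℚ) 1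
    norm_num [rescale_one] at h
    exact h
  have h2 : rescale (2 : ℚ) (bernoulliPowerSeries ℚ) * (rescale (2 : ℚ) (exp ℚ) - 1)
      = 2 * X := by
    have h := congrArg (rescale (2 : ℚ)) hbps
    rw [map_mul, map_sub, map_one, rescale_X] at h
    rw [h, two_eq_C]
  rw [Fser, Hser]
  refine mul_right_cancel₀ (b := exp ℚ) ?_ ?_
  · intro hc
    have := congrArg (constantCoeff (R := ℚ)) hc
    simp at this
  · linear_combination h2 + rescale (2:ℚ) (bernoulliPowerSeries ℚ) * hEE
      - (rescale (2:ℚ) (bernoulliPowerSeries ℚ) - 2 * bernoulliPowerSeries ℚ) * hE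
      - 2 * (exp ℚ + 1) * hbps

lemma sum_range_two_mul (k : ℕ) (f : ℕ → ℚ) :
    ∑ i ∈ Finset.range (2 * k), f i
      = ∑ i ∈ Finset.range k, (f (2 * i) + f (2 * i + 1)) := by
  induction k with
  | zero => simp
  | succ k ih =>
    rw [Nat.mul_succ, Finset.sum_range_succ, Finset.sum_range_succ,
      Finset.sum_range_succ (n := k), ih]
    ring

/-- The convolution identity: `Σ_{m=0}^{n} α_{n−m} β_m` equals `1` if `n = 0`
and `0` if `n ≥ 1`. -/
theorem alpha_beta_convolution (n : ℕ) :
    ∑ m ∈ Finset.range (n + 1), alphaQ (n - m) * betaQ m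
      = if n = 0 then 1 else 0 := by
  have h := congrArg (coeff (R := ℚ) (2 * n + 1)) key_identity
  rw [coeff_mul, Finset.Nat.sum_antidiagonal_eq_sum_range_succ_mk] at h
  have hrhs : coeff (R := ℚ) (2 * n + 1) (-(2 * X)) = if n = 0 then -2 else 0 := by
    rw [two_eq_C, map_neg, coeff_C_mul, coeff_X]
    rcases Nat.eq_zero_or_pos n with hn | hn
    · simp [hn]
    · have : 2 * n + 1 ≠ 1 := by omega
      simp [this, Nat.pos_iff_ne_zero.mp hn]
  rw [hrhs, show (2 * n + 1).succ = 2 * (n + 1) by omega, sum_range_two_mul] at h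
  -- simplify the summand of h
  have hterm : ∀ m ∈ Finset.range (n + 1),
      (coeff (R := ℚ) (2 * m) Fser * coeff (R := ℚ) (2 * n + 1 - 2 * m) Hser
        + coeff (R := ℚ) (2 * m + 1) Fser * coeff (R := ℚ) (2 * n + 1 - (2 * m + 1)) Hser)
      = ((2 : ℚ) ^ (2 * m) - 2) * bernoulli (2 * m) / Nat.factorial (2 * m)
          * (2 / Nat.factorial (2 * (n - m) + 1)) := by
    intro m hm
    have hmn : m ≤ n := by simpa [Nat.lt_succ_iff] using hm
    have e1 : 2 * n + 1 - 2 * m = 2 * (n - m) + 1 := by omega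
    have e2 : 2 * n + 1 - (2 * m + 1) = 2 * (n - m) := by omega
    rw [e1, e2, coeff_Fser, coeff_Hser, coeff_Fser, coeff_Hser]
    have o1 : (-1 : ℚ) ^ (2 * (n - m) + 1) = -1 := by
      rw [pow_succ, pow_mul]; norm_num
    have o2 : (-1 : ℚ) ^ (2 * (n - m)) = 1 := by rw [pow_mul]; norm_num
    rw [o1, o2]
    ring
  rw [Finset.sum_congr rfl hterm] at h
  -- now relate the goal to h
  have hgoal : ∑ m ∈ Finset.range (n + 1), alphaQ (n - m) * betaQ m
      = (-1 : ℚ) ^ (n + 1) * 2 ^ n / 2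
        * ∑ m ∈ Finset.range (n + 1),
          ((2 : ℚ) ^ (2 * m) - 2) * bernoulli (2 * m) / Nat.factorial (2 * m)
            * (2 / Nat.factorial (2 * (n - m) + 1)) := by
    rw [Finset.mul_sum]
    refine Finset.sum_congr rfl fun m hm => ?_
    have hmn : m ≤ n := by simpa [Nat.lt_succ_iff] using hm
    obtain ⟨k, hk⟩ : ∃ k, n = m + k := ⟨n - m, by omega⟩
    subst hk
    have e3 : m + k - m = k := by omega
    rw [alphaQ, betaQ, e3]
    have e4 : ((-2 : ℚ)) ^ k = (-1) ^ k * 2 ^ k := by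
      rw [show ((-2 : ℚ)) = -1 * 2 by norm_num, mul_pow]
    have e5 : ((-1 : ℚ)) ^ (m + k + 1) = (-1) ^ k * (-1) ^ (m + 1) := by
      rw [← pow_add]; ring_nf
    have e6 : ((2 : ℚ)) ^ (m + k) = 2 ^ k * 2 ^ m := by rw [pow_add]; ring
    rw [e4, e5, e6]
    ring
  rw [hgoal, h]
  rcases Nat.eq_zero_or_pos n with hn | hn
  · subst hn; norm_num
  · simp [Nat.pos_iff_ne_zero.mp hn]
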